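/- Let $\{(V_j,\omega_j)\}_{j=1}^n$ be a tight $p$-fusion frame in $\mathbb{R}^d$ with $k$-dimensional subspaces and $\sum_j \omega_j = 1$. Then for every integer $1 \le \ell \le p$, it is also a tight $\ell$-fusion frame with tight frame bound $A_\ell = \frac{(k/2)_\ell}{(d/2)_\ell}$, where $(a)_\ell = a(a+1)\cdots(a+\ell-1)$; i.e., $\sum_{j=1}^n \omega_j \|P_{V_j}(x)\|^{2\ell} = \frac{(k/2)_\ell}{(d/2)_\ell}\|x\|^{2\ell}$ for all $x \in \mathbb{R}^d$. -/

import Mathlib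

open Matrix Finset Polynomial

noncomputable section

private lemma aux_d2 (a b c : ℝ) (m : ℕ) :
    eval 0 (derivative (derivative ((C a + C b * X + C c * X ^ 2) ^ (m+1)))) =
      ((m:ℝ)+1) * m * a ^ (m-1) * b^2 + 2 * ((m:ℝ)+1) * c * a ^ m := by
  have hQ' : derivative (C a + C b * X + C c * X ^ 2) = C b + C (2*c) * X := by
    simp [derivative_pow]; ring
  rw [derivative_pow, hQ', Nat.add_sub_cancel]
  rw [derivative_mul, derivative_mul, derivative_pow, hQ']
  cases m with
  | zero => simp
  | succ m => simp [Nat.add_sub_cancel]; ring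

private lemma sum_inner_single_sq {d : ℕ} (y : EuclideanSpace ℝ (Fin d)) :
    ∑ i, (inner ℝ y (EuclideanSpace.single i (1:ℝ)) : ℝ) ^ 2 = ‖y‖ ^ 2 := by
  simp only [EuclideanSpace.inner_single_right, RCLike.inner_apply, conj_trivial, one_mul]
  rw [← real_inner_self_eq_norm_sq, real_inner_comm, PiLp.inner_apply]
  simp [sq]

private lemma quad_expand {d : ℕ} (y u : EuclideanSpace ℝ (Fin d)) (t : ℝ) :
    ‖y + t • u‖ ^ 2 = ‖y‖^2 + (2 * inner ℝ y u) * t + ‖u‖^2 * t^2 := by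
  rw [norm_add_sq_real, real_inner_smul_right, norm_smul, mul_pow,
    Real.norm_eq_abs, sq_abs]
  ring

private lemma proj_symm {d : ℕ} (V : Matrix (Fin d) (Fin d) ℝ) (h : V.IsSymm)
    (u v : EuclideanSpace ℝ (Fin d)) :
    (inner ℝ (Matrix.toEuclideanLin V u) v : ℝ) = inner ℝ u (Matrix.toEuclideanLin V v) := by
  have : V.IsHermitian := by rwa [Matrix.IsHermitian, conjTranspose_eq_transpose_of_trivial]
  exact (Matrix.isHermitian_iff_isSymmetric.mp this) u v

private lemma proj_idem {d : ℕ} (V : Matrix (Fin d) (Fin d) ℝ) (h : V * V = V)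
    (v : EuclideanSpace ℝ (Fin d)) :
    Matrix.toEuclideanLin V (Matrix.toEuclideanLin V v) = Matrix.toEuclideanLin V v := by
  conv_rhs => rw [← h]
  simp [Matrix.toEuclideanLin_apply, Matrix.mulVec_mulVec]

private lemma hpow_aux (m : ℕ) (y : ℝ) : (m:ℝ) * y^(m-1) * y = (m:ℝ) * y^m := by
  cases m with
  | zero => simp
  | succ s => rw [Nat.add_sub_cancel, mul_assoc, ← pow_succ]

private lemma descent {d n : ℕ} (k : ℕ) (V : Fin n → Matrix (Fin d) (Fin d) ℝ)
    (hV : ∀ j, (V j).IsSymm ∧ V j * V j = V j ∧ (V j).trace = (k:ℝ))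
    (ω : Fin n → ℝ) (m : ℕ) (B : ℝ)
    (H : ∀ x : EuclideanSpace ℝ (Fin d),
      ∑ j, ω j * ‖Matrix.toEuclideanLin (V j) x‖ ^ (2*(m+1)) = B * ‖x‖ ^ (2*(m+1)))
    (x : EuclideanSpace ℝ (Fin d)) :
    ((k:ℝ) + 2*m) * ∑ j, ω j * ‖Matrix.toEuclideanLin (V j) x‖ ^ (2*m)
      = B * ((d:ℝ) + 2*m) * ‖x‖ ^ (2*m) := by
  have hsymm : ∀ j (u v : EuclideanSpace ℝ (Fin d)),
      (inner ℝ (Matrix.toEuclideanLin (V j) u) v : ℝ) = inner ℝ u (Matrix.toEuclideanLin (V j) v) :=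
    fun j => proj_symm (V j) (hV j).1
  have hidem := fun j => proj_idem (V j) (hV j).2.1
  have hLL : ∀ j (u v : EuclideanSpace ℝ (Fin d)),
      (inner ℝ (Matrix.toEuclideanLin (V j) u) (Matrix.toEuclideanLin (V j) v) : ℝ)
        = inner ℝ (Matrix.toEuclideanLin (V j) u) v := by
    intro j u v
    rw [← hsymm j (Matrix.toEuclideanLin (V j) u) v, hidem]
  set e : Fin d → EuclideanSpace ℝ (Fin d) := fun i => EuclideanSpace.single i 1 with he
  set a : Fin n → ℝ := fun j => ‖Matrix.toEuclideanLin (V j) x‖^2 with ha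
  set b : Fin n → Fin d → ℝ := fun j i => 2 * inner ℝ (Matrix.toEuclideanLin (V j) x) (e i) with hb
  set c : Fin n → Fin d → ℝ := fun j i => ‖Matrix.toEuclideanLin (V j) (e i)‖^2 with hc
  set A : ℝ := ‖x‖^2 with hA
  set β : Fin d → ℝ := fun i => 2 * inner ℝ x (e i) with hβ
  have keyi : ∀ i, ∑ j, ω j * (((m:ℝ)+1)*m * (a j)^(m-1) * (b j i)^2
        + 2*((m:ℝ)+1) * (c j i) * (a j)^m)
      = B * (((m:ℝ)+1)*m * A^(m-1) * (β i)^2 + 2*((m:ℝ)+1) * 1 * A^m) := by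
    intro i
    have hpoly : (∑ j, C (ω j) * (C (a j) + C (b j i) * X + C (c j i) * X^2)^(m+1))
        = C B * (C A + C (β i) * X + C (1:ℝ) * X^2)^(m+1) := by
      apply Polynomial.funext; intro t
      rw [eval_finset_sum]
      simp only [eval_mul, eval_pow, eval_add, eval_C, eval_X]
      have hj : ∀ j, a j + b j i * t + c j i * t^2
          = ‖Matrix.toEuclideanLin (V j) (x + t • e i)‖^2 := by
        intro j
        rw [map_add, LinearMap.map_smul, quad_expand, ha, hb, hc]
        simp only [hLL]
      have hx : A + β i * t + 1 * t^2 = ‖x + t • e i‖^2 := by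
        have h1 : ‖e i‖^2 = 1 := by
          simp [he, EuclideanSpace.norm_single]
        rw [quad_expand, h1, hA, hβ]
      calc ∑ j, ω j * (a j + b j i * t + c j i * t ^ 2) ^ (m + 1)
          = ∑ j, ω j * ‖Matrix.toEuclideanLin (V j) (x + t • e i)‖ ^ (2*(m+1)) := by
            refine Finset.sum_congr rfl fun j _ => ?_
            rw [hj j, ← pow_mul]
        _ = B * ‖x + t • e i‖ ^ (2*(m+1)) := H _
        _ = B * (A + β i * t + 1 * t ^ 2) ^ (m + 1) := by rw [hx, ← pow_mul]
    have hD := congrArg (fun p => eval 0 (derivative (derivative p))) hpoly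
    simp only [map_sum, derivative_C_mul, eval_finset_sum, eval_mul, eval_C] at hD
    calc ∑ j, ω j * (((m:ℝ)+1)*m * (a j)^(m-1) * (b j i)^2
            + 2*((m:ℝ)+1) * (c j i) * (a j)^m)
        = ∑ j, ω j * eval 0 (derivative (derivative
            ((C (a j) + C (b j i) * X + C (c j i) * X^2)^(m+1)))) := by
          refine Finset.sum_congr rfl fun j _ => ?_
          rw [aux_d2]
      _ = B * eval 0 (derivative (derivative ((C A + C (β i) * X + C (1:ℝ) * X^2)^(m+1)))) := hD
      _ = B * (((m:ℝ)+1)*m * A^(m-1) * (β i)^2 + 2*((m:ℝ)+1) * 1 * A^m) := by rw [aux_d2]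
  have hsumb : ∀ j, ∑ i, (b j i)^2 = 4 * a j := by
    intro j
    simp only [hb, mul_pow, he]
    rw [← Finset.mul_sum, sum_inner_single_sq]
    norm_num [ha]
  have hsumc : ∀ j, ∑ i, c j i = k := by
    intro j
    have hci : ∀ i, c j i = (V j) i i := by
      intro i
      show ‖Matrix.toEuclideanLin (V j) (e i)‖^2 = (V j) i i
      have h1 : ‖Matrix.toEuclideanLin (V j) (e i)‖^2
          = (inner ℝ (Matrix.toEuclideanLin (V j) (e i)) (Matrix.toEuclideanLin (V j) (e i)) : ℝ) :=
        (real_inner_self_eq_norm_sq _).symm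
      rw [h1, hLL, hsymm]
      simp [he, EuclideanSpace.inner_single_left, Matrix.toEuclideanLin_apply,
        Matrix.mulVec_single]
    rw [Finset.sum_congr rfl fun i _ => hci i]
    exact (hV j).2.2
  have hsumβ : ∑ i, (β i)^2 = 4 * A := by
    simp only [hβ, mul_pow, he]
    rw [← Finset.mul_sum, sum_inner_single_sq]
    norm_num [hA]
  have totsum : ∑ j, ∑ i, ω j * (((m:ℝ)+1)*m * (a j)^(m-1) * (b j i)^2
        + 2*((m:ℝ)+1) * (c j i) * (a j)^m)
      = ∑ i : Fin d, B * (((m:ℝ)+1)*m * A^(m-1) * (β i)^2 + 2*((m:ℝ)+1) * 1 * A^m) := by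
    rw [Finset.sum_comm]
    exact Finset.sum_congr rfl fun i _ => keyi i
  have lhs_eq : ∑ j, ∑ i, ω j * (((m:ℝ)+1)*m * (a j)^(m-1) * (b j i)^2
        + 2*((m:ℝ)+1) * (c j i) * (a j)^m)
      = 2*((m:ℝ)+1) * ∑ j, ω j * (((k:ℝ) + 2*m) * (a j)^m) := by
    rw [Finset.mul_sum]
    refine Finset.sum_congr rfl fun j _ => ?_
    have h1 : ∑ i, ω j * (((m:ℝ)+1)*m * (a j)^(m-1) * (b j i)^2
          + 2*((m:ℝ)+1) * (c j i) * (a j)^m)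
        = (ω j * (((m:ℝ)+1)*m * (a j)^(m-1))) * (∑ i, (b j i)^2)
          + (ω j * (2*((m:ℝ)+1) * (a j)^m)) * (∑ i, c j i) := by
      rw [Finset.mul_sum, Finset.mul_sum, ← Finset.sum_add_distrib]
      refine Finset.sum_congr rfl fun i _ => ?_
      ring
    rw [h1, hsumb j, hsumc j]
    have := hpow_aux m (a j)
    linear_combination (4*((m:ℝ)+1) * ω j) * this
  have rhs_eq : ∑ i : Fin d, B * (((m:ℝ)+1)*m * A^(m-1) * (β i)^2 + 2*((m:ℝ)+1) * 1 * A^m)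
      = 2*((m:ℝ)+1) * (B * (((d:ℝ) + 2*m) * A^m)) := by
    have h1 : ∑ i : Fin d, B * (((m:ℝ)+1)*m * A^(m-1) * (β i)^2 + 2*((m:ℝ)+1) * 1 * A^m)
        = (B * (((m:ℝ)+1)*m * A^(m-1))) * (∑ i, (β i)^2)
          + ((Finset.univ : Finset (Fin d)).card : ℝ) * (B * (2*((m:ℝ)+1) * 1 * A^m)) := by
      rw [Finset.mul_sum]
      rw [show (((Finset.univ : Finset (Fin d)).card : ℝ) * (B * (2*((m:ℝ)+1) * 1 * A^m)))
        = ∑ _i : Fin d, (B * (2*((m:ℝ)+1) * 1 * A^m)) by rw [Finset.sum_const, nsmul_eq_mul]]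
      rw [← Finset.sum_add_distrib]
      refine Finset.sum_congr rfl fun i _ => ?_
      ring
    rw [h1, hsumβ]
    simp only [Finset.card_univ, Fintype.card_fin]
    have := hpow_aux m A
    linear_combination (4*((m:ℝ)+1) * B) * this
  rw [lhs_eq, rhs_eq] at totsum
  have hne : (2*((m:ℝ)+1)) ≠ 0 := by positivity
  have final := mul_left_cancel₀ hne totsum
  calc ((k:ℝ) + 2*m) * ∑ j, ω j * ‖Matrix.toEuclideanLin (V j) x‖ ^ (2*m)
      = ∑ j, ω j * (((k:ℝ) + 2*m) * (a j)^m) := by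
        rw [Finset.mul_sum]
        refine Finset.sum_congr rfl fun j _ => ?_
        rw [ha]
        simp only [← pow_mul]
        ring
    _ = B * (((d:ℝ) + 2*m) * A^m) := final
    _ = B * ((d:ℝ) + 2*m) * ‖x‖ ^ (2*m) := by rw [hA, ← pow_mul]; ring

/-- `P` is the orthogonal projection matrix onto a `k`-dimensional subspace of `ℝ^d`. -/
def IsProjOfDim (k d : ℕ) (P : Matrix (Fin d) (Fin d) ℝ) : Prop :=
  P.IsSymm ∧ P * P = P ∧ P.trace = (k : ℝ)

/-- A tight `p`-fusion frame with weights summing to one is a tight `ℓ`-fusion frame for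
every `1 ≤ ℓ ≤ p`, with tight bound `A_ℓ = (k/2)_ℓ / (d/2)_ℓ`. -/
theorem tight_p_fusion_is_tight_ell_fusion (d k n p : ℕ) (hk : 1 ≤ k) (hkd : k ≤ d)
    (hp : 1 ≤ p) (V : Fin n → Matrix (Fin d) (Fin d) ℝ)
    (hV : ∀ j, IsProjOfDim k d (V j)) (ω : Fin n → ℝ) (hω : ∀ j, 0 < ω j)
    (hsum : (∑ j, ω j) = 1) (Ap : ℝ)
    (htight : ∀ x : EuclideanSpace ℝ (Fin d),
      ∑ j, ω j * ‖Matrix.toEuclideanLin (V j) x‖ ^ (2 * p) = Ap * ‖x‖ ^ (2 * p)) :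
    ∀ ℓ : ℕ, 1 ≤ ℓ → ℓ ≤ p →
      ∀ x : EuclideanSpace ℝ (Fin d),
        ∑ j, ω j * ‖Matrix.toEuclideanLin (V j) x‖ ^ (2 * ℓ) =
          ((∏ i ∈ Finset.range ℓ, ((k : ℝ) / 2 + i)) /
              (∏ i ∈ Finset.range ℓ, ((d : ℝ) / 2 + i))) * ‖x‖ ^ (2 * ℓ) := by
  have hk1 : (1:ℝ) ≤ (k:ℝ) := by exact_mod_cast hk
  have hd1 : (1:ℝ) ≤ (d:ℝ) := by exact_mod_cast hk.trans hkd
  set cc : ℕ → ℝ := fun m => ∏ i ∈ Finset.range m, (((k:ℝ)+2*i)/((d:ℝ)+2*i)) with hcc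
  have hfacpos : ∀ (c : ℝ) (i : ℕ), 1 ≤ c → (0:ℝ) < c + 2*i := by
    intro c i hc
    have : (0:ℝ) ≤ (i:ℝ) := Nat.cast_nonneg i
    linarith
  have hccpos : ∀ m, 0 < cc m := by
    intro m
    refine Finset.prod_pos fun i _ => ?_
    exact div_pos (hfacpos _ i hk1) (hfacpos _ i hd1)
  have hccsucc : ∀ m, cc (m+1) = cc m * (((k:ℝ)+2*m)/((d:ℝ)+2*m)) := by
    intro m
    rw [hcc]
    exact Finset.prod_range_succ _ m
  have claim : ∀ t, t ≤ p → ∀ x : EuclideanSpace ℝ (Fin d),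
      ∑ j, ω j * ‖Matrix.toEuclideanLin (V j) x‖ ^ (2 * (p - t))
        = Ap * (cc (p - t) / cc p) * ‖x‖ ^ (2 * (p - t)) := by
    intro t
    induction t with
    | zero =>
      intro _ x
      rw [Nat.sub_zero, div_self (hccpos p).ne', mul_one]
      exact htight x
    | succ t IH =>
      intro ht x
      have ht' : t ≤ p := le_of_lt (Nat.lt_of_succ_le ht)
      set m := p - (t+1) with hm
      have hpt : p - t = m + 1 := by omega
      have H' : ∀ y : EuclideanSpace ℝ (Fin d),
          ∑ j, ω j * ‖Matrix.toEuclideanLin (V j) y‖ ^ (2*(m+1))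
            = (Ap * (cc (m+1) / cc p)) * ‖y‖ ^ (2*(m+1)) := by
        intro y
        have := IH ht' y
        rwa [hpt] at this
      have hdes := descent k V (fun j => hV j) ω m (Ap * (cc (m+1) / cc p)) H' x
      have hk2 : ((k:ℝ) + 2*m) ≠ 0 := (hfacpos _ m hk1).ne'
      have hd2 : ((d:ℝ) + 2*m) ≠ 0 := (hfacpos _ m hd1).ne'
      apply mul_left_cancel₀ hk2
      rw [hdes, hccsucc m]
      field_simp
  -- Ap is forced
  have hAp : Ap = cc p := by
    have := claim p le_rfl 0
    simp only [Nat.sub_self, mul_zero, pow_zero, mul_one] at this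
    rw [hsum] at this
    have h2 : cc 0 = 1 := by simp [hcc]
    rw [h2] at this
    field_simp at this
    rw [eq_div_iff (hccpos p).ne'] at this
    linarith [this]
  intro ℓ hℓ hℓp x
  have := claim (p - ℓ) (Nat.sub_le p ℓ) x
  rw [show p - (p - ℓ) = ℓ by omega] at this
  rw [hAp] at this
  rw [show cc p * (cc ℓ / cc p) = cc ℓ by have := (hccpos p).ne'; field_simp] at this
  rw [this]
  congr 1
  -- cc ℓ = ratio of Pochhammer products
  have h2 : ∀ (c:ℝ), ∏ i ∈ Finset.range ℓ, (c/2 + (i:ℝ))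
      = (∏ i ∈ Finset.range ℓ, (c + 2*(i:ℝ))) / 2^ℓ := by
    intro c
    rw [show (2:ℝ)^ℓ = ∏ _i ∈ Finset.range ℓ, (2:ℝ) by rw [Finset.prod_const, Finset.card_range]]
    rw [← Finset.prod_div_distrib]
    exact Finset.prod_congr rfl fun i _ => by ring
  simp only [hcc]
  rw [h2, h2, Finset.prod_div_distrib]
  have hbne : (∏ i ∈ Finset.range ℓ, ((d:ℝ) + 2*(i:ℝ))) ≠ 0 :=
    (Finset.prod_pos fun i _ => hfacpos _ i hd1).ne'
  have h2ne : ((2:ℝ)^ℓ) ≠ 0 := by positivity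
  field_simp
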